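/- Let λ ∈ (0,∞) and let α, β : (0,1] → [0,1) be two admissible families of discount factors with the same asymptotic discount rate λ, i.e. α(h)/h → λ and β(h)/h → λ as h → 0+. Let C > 0. Then for every ε > 0 there exists δ > 0 such that for every partition with stage durations h_i ∈ (0,δ], ∑_i h_i = ∞, and every stream (g_i) with |g_i| ≤ C h_i, one has |∑_{i=1}^∞ (∏_{j=1}^{i-1}(1−α(h_j))) g_i − ∑_{i=1}^∞ (∏_{j=1}^{i-1}(1−β(h_j))) g_i| ≤ ε. -/
import Mathlib


open Filter

private lemma telescope_prod (c : ℕ → ℝ) (N : ℕ) :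
    ∑ i ∈ Finset.range N, (∏ j ∈ Finset.range i, (1 - c j)) * c i
      = 1 - ∏ j ∈ Finset.range N, (1 - c j) := by
  induction N with
  | zero => simp
  | succ n ih => rw [Finset.sum_range_succ, Finset.prod_range_succ, ih]; ring

/-- two admissible families of discount factors with the same
asymptotic discount rate `λ` give asymptotically equal discounted evaluations
of streams bounded by `C·(stage duration)`, as the mesh tends to `0`. -/
theorem admissible_discount_equiv (l : ℝ) (hl : 0 < l)
    (α β : ℝ → ℝ)
    (hα_mem : ∀ h ∈ Set.Ioc (0:ℝ) 1, α h ∈ Set.Ico (0:ℝ) 1)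
    (hβ_mem : ∀ h ∈ Set.Ioc (0:ℝ) 1, β h ∈ Set.Ico (0:ℝ) 1)
    (hα : Tendsto (fun h => α h / h) (nhdsWithin 0 (Set.Ioi 0)) (nhds l))
    (hβ : Tendsto (fun h => β h / h) (nhdsWithin 0 (Set.Ioi 0)) (nhds l))
    (C : ℝ) (hC : 0 < C) :
    ∀ ε > (0:ℝ), ∃ δ > (0:ℝ),
      ∀ h : ℕ → ℝ, (∀ j, 0 < h j ∧ h j ≤ δ) →
        Tendsto (fun N => ∑ j ∈ Finset.range N, h j) atTop atTop →
        ∀ g : ℕ → ℝ, (∀ i, |g i| ≤ C * h i) →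
        |∑' i : ℕ, (∏ j ∈ Finset.range i, (1 - α (h j))) * g i -
         ∑' i : ℕ, (∏ j ∈ Finset.range i, (1 - β (h j))) * g i| ≤ ε := by
  intro ε hε
  set η : ℝ := min (l/2) (ε*l^2/(4*C)) with hη_def
  have hη : 0 < η := lt_min (by positivity) (by positivity)
  have hηl : η ≤ l/2 := min_le_left _ _
  have hηε : η ≤ ε*l^2/(4*C) := min_le_right _ _
  have hlη : 0 < l - η := by linarith
  have hlη' : 0 < l + η := by linarith
  rw [Metric.tendsto_nhdsWithin_nhds] at hα hβ
  obtain ⟨δ₁, hδ₁, hα'⟩ := hα η hη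
  obtain ⟨δ₂, hδ₂, hβ'⟩ := hβ η hη
  refine ⟨min (min (δ₁/2) (δ₂/2)) (1/(2*l)), by positivity, ?_⟩
  intro h hh hdiv g hg
  have hhpos : ∀ j, 0 < h j := fun j => (hh j).1
  -- the bounds on α and β at the mesh points
  have key : ∀ (γ : ℝ → ℝ) (δ₀ : ℝ) , 0 < δ₀ →
      (∀ ⦃x : ℝ⦄, x ∈ Set.Ioi (0:ℝ) → dist x 0 < δ₀ → dist (γ x / x) l < η) →
      (∀ j, h j ≤ min (min (δ₁/2) (δ₂/2)) (1/(2*l)) → h j ≤ δ₀/2 →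
        (l-η)*h j ≤ γ (h j) ∧ γ (h j) ≤ (l+η)*h j) := by
    intro γ δ₀ hδ₀ hγ j _ hle
    have hx : h j ∈ Set.Ioi (0:ℝ) := hhpos j
    have hd : dist (h j) 0 < δ₀ := by
      rw [Real.dist_eq, sub_zero, abs_of_pos (hhpos j)]; linarith
    have := hγ hx hd
    rw [Real.dist_eq, abs_sub_lt_iff] at this
    constructor
    · have h1 : l - η < γ (h j) / h j := by linarith [this.2]
      have := (lt_div_iff₀ (hhpos j)).mp h1
      linarith
    · have h1 : γ (h j) / h j < l + η := by linarith [this.1]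
      have := (div_lt_iff₀ (hhpos j)).mp h1
      linarith
  have hαb : ∀ j, (l-η)*h j ≤ α (h j) ∧ α (h j) ≤ (l+η)*h j := by
    intro j
    refine key α δ₁ hδ₁ hα' j (hh j).2 ?_
    calc h j ≤ _ := (hh j).2
      _ ≤ δ₁/2 := le_trans (min_le_left _ _) (min_le_left _ _)
  have hβb : ∀ j, (l-η)*h j ≤ β (h j) ∧ β (h j) ≤ (l+η)*h j := by
    intro j
    refine key β δ₂ hδ₂ hβ' j (hh j).2 ?_
    calc h j ≤ _ := (hh j).2
      _ ≤ δ₂/2 := le_trans (min_le_left _ _) (min_le_right _ _)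
  have hh2l : ∀ j, h j * (2*l) ≤ 1 := by
    intro j
    have h1 : h j ≤ 1/(2*l) := le_trans (hh j).2 (min_le_right _ _)
    exact (le_div_iff₀ (by positivity)).mp h1
  set a : ℕ → ℝ := fun j => (l-η)*h j with ha_def
  set b : ℕ → ℝ := fun j => (l+η)*h j with hb_def
  have ha_nonneg : ∀ j, 0 ≤ a j := fun j => by
    have := (hhpos j).le; positivity
  have hab : ∀ j, a j ≤ b j := fun j =>
    mul_le_mul_of_nonneg_right (by linarith) (hhpos j).le
  have hb34 : ∀ j, b j ≤ 3/4 := by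
    intro j
    have h1 := hh2l j
    have h2 := (hhpos j).le
    have h3 : η * h j ≤ (l/2) * h j := mul_le_mul_of_nonneg_right hηl h2
    simp only [hb_def]
    nlinarith
  set U : ℕ → ℝ := fun i => ∏ j ∈ Finset.range i, (1 - a j) with hU_def
  set L : ℕ → ℝ := fun i => ∏ j ∈ Finset.range i, (1 - b j) with hL_def
  have hL_nonneg : ∀ i, 0 ≤ L i := fun i =>
    Finset.prod_nonneg fun j _ => by linarith [hb34 j]
  have hU_le_one : ∀ i, U i ≤ 1 :=
    fun i => Finset.prod_le_one (fun j _ => by linarith [hab j, hb34 j])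
      (fun j _ => by linarith [ha_nonneg j])
  -- sandwich for any γ satisfying the bounds
  have sandwich : ∀ (γ : ℝ → ℝ),
      (∀ j, (l-η)*h j ≤ γ (h j) ∧ γ (h j) ≤ (l+η)*h j) →
      ∀ i, L i ≤ (∏ j ∈ Finset.range i, (1 - γ (h j))) ∧
        (∏ j ∈ Finset.range i, (1 - γ (h j))) ≤ U i := by
    intro γ hγ i
    have hbj : ∀ j, b j = (l+η)*h j := fun j => rfl
    have haj : ∀ j, a j = (l-η)*h j := fun j => rfl
    constructor
    · exact Finset.prod_le_prod (fun j _ => by linarith [hb34 j])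
        (fun j _ => by linarith [(hγ j).2, hbj j])
    · exact Finset.prod_le_prod
        (fun j _ => by linarith [(hγ j).2, hb34 j, hbj j])
        (fun j _ => by linarith [(hγ j).1, haj j])
  have hAsw := sandwich α hαb
  have hBsw := sandwich β hβb
  -- summability of U * h and L * h, with bounds on tsums
  have hUa : ∀ N, ∑ i ∈ Finset.range N, U i * a i = 1 - U N := telescope_prod a
  have hLb : ∀ N, ∑ i ∈ Finset.range N, L i * b i = 1 - L N := telescope_prod b
  have hUh_eq : ∀ i, U i * h i = (U i * a i) * (l-η)⁻¹ := by
    intro i; field_simp [ha_def]; ring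
  have hLh_eq : ∀ i, L i * h i = (L i * b i) * (l+η)⁻¹ := by
    intro i; field_simp [hb_def]; ring
  have hU_nonneg : ∀ i, 0 ≤ U i := fun i =>
    le_trans (hL_nonneg i) (le_trans ((sandwich α hαb i).1) ((sandwich α hαb i).2))
  have hUh_partial : ∀ N, ∑ i ∈ Finset.range N, U i * h i ≤ (l-η)⁻¹ := by
    intro N
    have : ∑ i ∈ Finset.range N, U i * h i
        = (∑ i ∈ Finset.range N, U i * a i) * (l-η)⁻¹ := by
      rw [Finset.sum_mul]; exact Finset.sum_congr rfl fun i _ => hUh_eq i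
    rw [this, hUa N]
    have : 1 - U N ≤ 1 := by linarith [hU_nonneg N]
    have h2 : (0:ℝ) ≤ (l-η)⁻¹ := by positivity
    nlinarith
  have hUh_sum : Summable (fun i => U i * h i) :=
    summable_of_sum_range_le (fun i => mul_nonneg (hU_nonneg i) (hhpos i).le)
      hUh_partial
  have hLh_sum : Summable (fun i => L i * h i) :=
    hUh_sum.of_nonneg_of_le (fun i => mul_nonneg (hL_nonneg i) (hhpos i).le)
      (fun i => mul_le_mul_of_nonneg_right
        (le_trans (hAsw i).1 (hAsw i).2) (hhpos i).le)
  have hUh_tsum : ∑' i, U i * h i ≤ (l-η)⁻¹ :=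
    Summable.tsum_le_of_sum_range_le hUh_sum hUh_partial
  -- L N → 0
  have hLN_zero : Tendsto L atTop (nhds 0) := by
    apply squeeze_zero hL_nonneg
      (g := fun N => Real.exp (-( (l+η) * ∑ j ∈ Finset.range N, h j)))
    · intro N
      have h1 : L N ≤ ∏ j ∈ Finset.range N, Real.exp (-(b j)) := by
        apply Finset.prod_le_prod (fun j _ => by linarith [hb34 j])
        intro j _
        have := Real.add_one_le_exp (-(b j))
        linarith
      calc L N ≤ _ := h1
        _ = Real.exp (∑ j ∈ Finset.range N, (-(b j))) := (Real.exp_sum _ _).symm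
        _ = Real.exp (-((l+η) * ∑ j ∈ Finset.range N, h j)) := by
            rw [Finset.mul_sum]
            congr 1
            rw [← Finset.sum_neg_distrib]
    · refine Real.tendsto_exp_atBot.comp ?_
      refine tendsto_neg_atBot_iff.mpr ?_
      exact Tendsto.const_mul_atTop hlη' hdiv
  -- tsum of L * h equals (l+η)⁻¹
  have hLh_tsum : ∑' i, L i * h i = (l+η)⁻¹ := by
    have h1 : Tendsto (fun N => ∑ i ∈ Finset.range N, L i * h i) atTop
        (nhds (∑' i, L i * h i)) := hLh_sum.hasSum.tendsto_sum_nat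
    have h2 : Tendsto (fun N => ∑ i ∈ Finset.range N, L i * h i) atTop
        (nhds ((l+η)⁻¹)) := by
      have heq : ∀ N, ∑ i ∈ Finset.range N, L i * h i = (1 - L N) * (l+η)⁻¹ := by
        intro N
        rw [← hLb N, Finset.sum_mul]
        exact Finset.sum_congr rfl fun i _ => hLh_eq i
      simp only [heq]
      have : Tendsto (fun N => (1 - L N) * (l+η)⁻¹) atTop
          (nhds ((1 - 0) * (l+η)⁻¹)) :=
        (Tendsto.const_sub 1 hLN_zero).mul_const _
      simpa using this
    exact tendsto_nhds_unique h1 h2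
  -- summability of discounted streams
  have habs : ∀ (γ : ℝ → ℝ),
      (∀ i, L i ≤ (∏ j ∈ Finset.range i, (1 - γ (h j))) ∧
        (∏ j ∈ Finset.range i, (1 - γ (h j))) ≤ U i) →
      Summable (fun i => (∏ j ∈ Finset.range i, (1 - γ (h j))) * g i) := by
    intro γ hsw
    apply Summable.of_abs
    apply (hUh_sum.mul_left C).of_nonneg_of_le (fun i => abs_nonneg _)
    intro i
    rw [abs_mul]
    have h1 : |∏ j ∈ Finset.range i, (1 - γ (h j))| ≤ U i := by
      rw [abs_of_nonneg (le_trans (hL_nonneg i) (hsw i).1)]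
      exact (hsw i).2
    calc |∏ j ∈ Finset.range i, (1 - γ (h j))| * |g i|
        ≤ U i * (C * h i) :=
          mul_le_mul h1 (hg i) (abs_nonneg _) (hU_nonneg i)
      _ = C * (U i * h i) := by ring
  have hAg := habs α hAsw
  have hBg := habs β hBsw
  -- final estimate
  rw [← Summable.tsum_sub hAg hBg]
  have hbound_sum : Summable (fun i => C * (U i * h i - L i * h i)) :=
    ((hUh_sum.sub hLh_sum).mul_left C)
  have habs_sum : Summable (fun i =>
      |(∏ j ∈ Finset.range i, (1 - α (h j))) * g i -
        (∏ j ∈ Finset.range i, (1 - β (h j))) * g i|) := by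
    apply hbound_sum.of_nonneg_of_le (fun i => abs_nonneg _)
    intro i
    set A := ∏ j ∈ Finset.range i, (1 - α (h j))
    set B := ∏ j ∈ Finset.range i, (1 - β (h j))
    have hA1 := (hAsw i).1; have hA2 := (hAsw i).2
    have hB1 := (hBsw i).1; have hB2 := (hBsw i).2
    have h1 : |A - B| ≤ U i - L i := abs_sub_le_iff.mpr ⟨by linarith, by linarith⟩
    calc |A * g i - B * g i| = |A - B| * |g i| := by rw [← abs_mul]; ring_nf
      _ ≤ (U i - L i) * (C * h i) :=
          mul_le_mul h1 (hg i) (abs_nonneg _) (by linarith [hA1, hA2, hB1, hB2])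
      _ = C * (U i * h i - L i * h i) := by ring
  calc |∑' i, ((∏ j ∈ Finset.range i, (1 - α (h j))) * g i -
          (∏ j ∈ Finset.range i, (1 - β (h j))) * g i)|
      ≤ ∑' i, |(∏ j ∈ Finset.range i, (1 - α (h j))) * g i -
          (∏ j ∈ Finset.range i, (1 - β (h j))) * g i| := by
        have := norm_tsum_le_tsum_norm (f := fun i =>
          (∏ j ∈ Finset.range i, (1 - α (h j))) * g i -
            (∏ j ∈ Finset.range i, (1 - β (h j))) * g i)
          (by simpa [Real.norm_eq_abs] using habs_sum)
        simpa [Real.norm_eq_abs] using this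
    _ ≤ ∑' i, C * (U i * h i - L i * h i) := by
        apply Summable.tsum_le_tsum ?_ habs_sum hbound_sum
        intro i
        set A := ∏ j ∈ Finset.range i, (1 - α (h j))
        set B := ∏ j ∈ Finset.range i, (1 - β (h j))
        have hA1 := (hAsw i).1; have hA2 := (hAsw i).2
        have hB1 := (hBsw i).1; have hB2 := (hBsw i).2
        have h1 : |A - B| ≤ U i - L i := abs_sub_le_iff.mpr ⟨by linarith, by linarith⟩
        calc |A * g i - B * g i| = |A - B| * |g i| := by rw [← abs_mul]; ring_nf
          _ ≤ (U i - L i) * (C * h i) :=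
              mul_le_mul h1 (hg i) (abs_nonneg _) (by linarith [hA1, hA2, hB1, hB2])
          _ = C * (U i * h i - L i * h i) := by ring
    _ = C * ((∑' i, U i * h i) - (∑' i, L i * h i)) := by
        rw [tsum_mul_left, Summable.tsum_sub hUh_sum hLh_sum]
    _ ≤ C * ((l-η)⁻¹ - (l+η)⁻¹) := by
        apply mul_le_mul_of_nonneg_left _ hC.le
        rw [hLh_tsum]
        linarith [hUh_tsum]
    _ ≤ ε := by
        have hcη : η * (4*C) ≤ ε*l^2 := (le_div_iff₀ (by positivity)).mp hηε
        have heq : C * ((l-η)⁻¹ - (l+η)⁻¹) = 2*C*η/((l-η)*(l+η)) := by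
          field_simp
          ring
        rw [heq, div_le_iff₀ (by positivity)]
        nlinarith [mul_le_mul hηl hηl hη.le (by positivity : (0:ℝ) ≤ l/2), hη.le]
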